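/- For x ∈ Z[ω], gde(x, √2) = gde(|x|², 2). -/
import Mathlib


noncomputable section

open Complex

/-- The eighth root of unity ω = e^{iπ/4}. -/
def omg : ℂ := Complex.exp (Real.pi * Complex.I / 4)

/-- √2 as a complex number. -/
def rt2 : ℂ := (Real.sqrt 2 : ℝ)

/-- Membership in the ring Z[ω] = {a + bω + cω² + dω³ : a,b,c,d ∈ ℤ}. -/
def Zomega (z : ℂ) : Prop :=
  ∃ a b c d : ℤ, z = a + b * omg + c * omg ^ 2 + d * omg ^ 3

/-- Membership in the ring Z[1/√2, i] = {u/(√2)^n : u ∈ Z[ω], n ∈ ℕ}. -/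
def ZRoot2i (z : ℂ) : Prop :=
  ∃ u : ℂ, Zomega u ∧ ∃ n : ℕ, z = u / rt2 ^ n

/-- `b` divides `z` within the ring Z[ω]. -/
def ZDvd (b z : ℂ) : Prop := ∃ q : ℂ, Zomega q ∧ z = b * q

/-- `k` is the greatest dividing exponent of base `b` with respect to `z`:
`b^k` divides `z` in Z[ω], while `b^(k+1)` does not. -/
def IsGde (b z : ℂ) (k : ℕ) : Prop := ZDvd (b ^ k) z ∧ ¬ ZDvd (b ^ (k + 1)) z

/-- `k` is the smallest denominator exponent of base √2 with respect to `z`: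
the smallest integer `k` such that `z·(√2)^k ∈ Z[ω]`. -/
def IsSde (z : ℂ) (k : ℤ) : Prop :=
  Zomega (z * rt2 ^ k) ∧ ∀ j : ℤ, Zomega (z * rt2 ^ j) → k ≤ j

/- ### Auxiliary lemmas -/

lemma hs2 : rt2 ^ 2 = 2 := by
  rw [rt2, ← Complex.ofReal_pow, Real.sq_sqrt (by norm_num : (2:ℝ) ≥ 0)]
  norm_num

lemma omg_eq : omg = rt2 / 2 * (1 + I) := by
  have h : (↑Real.pi * I / 4 : ℂ) = (↑(Real.pi / 4) : ℝ) * I := by push_cast; ring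
  rw [omg, h, Complex.exp_mul_I, ← Complex.ofReal_cos, ← Complex.ofReal_sin,
    Real.cos_pi_div_four, Real.sin_pi_div_four, rt2]
  push_cast; ring

lemma omg_sq : omg ^ 2 = I := by
  rw [omg_eq]
  linear_combination ((1 + I)^2 / 4) * hs2 + (1/2 : ℂ) * Complex.I_sq

lemma h4 : omg ^ 4 = -1 := by
  rw [show omg ^ 4 = (omg ^ 2) ^ 2 by ring, omg_sq, Complex.I_sq]

lemma rt2_eq : rt2 = omg - omg ^ 3 := by
  rw [show omg ^ 3 = omg ^ 2 * omg by ring, omg_sq, omg_eq]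
  linear_combination (rt2/2) * Complex.I_sq

lemma conj_rt2 : (starRingEnd ℂ) rt2 = rt2 := by rw [rt2]; exact Complex.conj_ofReal _

lemma conj_omg : (starRingEnd ℂ) omg = -omg ^ 3 := by
  rw [show omg ^ 3 = omg ^ 2 * omg by ring, omg_sq, omg_eq, map_mul, map_add, map_one,
    Complex.conj_I, map_div₀, conj_rt2, map_ofNat]
  linear_combination (rt2/2) * Complex.I_sq

/-- The canonical representation of an element of Z[ω]. -/
def rep (a b c d : ℤ) : ℂ := a + b * omg + c * omg ^ 2 + d * omg ^ 3

lemma rep_def (a b c d : ℤ) : (a : ℂ) + b * omg + c * omg ^ 2 + d * omg ^ 3 = rep a b c d := rfl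

lemma rep_mem (a b c d : ℤ) : Zomega (rep a b c d) := ⟨a, b, c, d, rfl⟩

lemma mul_rep (a b c d a' b' c' d' : ℤ) :
    rep a b c d * rep a' b' c' d' =
    rep (a*a' - b*d' - c*c' - d*b') (a*b' + b*a' - c*d' - d*c')
        (a*c' + b*b' + c*a' - d*d') (a*d' + b*c' + c*b' + d*a') := by
  simp only [rep]
  push_cast
  linear_combination ((b:ℂ)*d' + c*c' + d*b' + ((c:ℂ)*d' + d*c')*omg + (d:ℂ)*d'*omg^2) * h4

lemma conj_rep (a b c d : ℤ) :
    (starRingEnd ℂ) (rep a b c d) = rep a (-d) (-c) (-b) := by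
  simp only [rep, map_add, map_mul, map_pow, conj_omg, map_intCast]
  push_cast
  linear_combination ((c:ℂ)*omg^2 - d*omg*(omg^4 - 1)) * h4

lemma rt2_mul_rep (a b c d : ℤ) :
    rt2 * rep a b c d = rep (b-d) (a+c) (b+d) (c-a) := by
  simp only [rep]
  rw [rt2_eq]
  push_cast
  linear_combination ((d:ℂ) - b - c*omg - d*omg^2) * h4

lemma two_pow_mul_rep (m : ℕ) (a b c d : ℤ) :
    (2:ℂ)^m * rep a b c d = rep (2^m*a) (2^m*b) (2^m*c) (2^m*d) := by
  simp only [rep]; push_cast; ring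

lemma norm_rep (a b c d : ℤ) :
    rep a b c d * (starRingEnd ℂ) (rep a b c d) =
    rep (a^2+b^2+c^2+d^2) (a*b+b*c+c*d-d*a) 0 (-(a*b+b*c+c*d-d*a)) := by
  rw [conj_rep, mul_rep]
  simp only [rep]; push_cast; ring

lemma int_sqrt (m n : ℤ) (h : (m:ℝ) + n * Real.sqrt 2 = 0) : m = 0 ∧ n = 0 := by
  rcases eq_or_ne n 0 with h0 | h0
  · subst h0; simp at h; exact ⟨by exact_mod_cast h, rfl⟩
  · exfalso
    have hn : (n:ℝ) ≠ 0 := Int.cast_ne_zero.mpr h0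
    have hval : Real.sqrt 2 = (-m : ℝ) / n := by field_simp; linarith
    exact irrational_sqrt_two ⟨(-m : ℚ)/n, by push_cast; rw [hval]⟩

lemma rep_re_im (a b c d : ℤ) :
    rep a b c d = ((a : ℝ) + ((b:ℝ)-(d:ℝ)) * Real.sqrt 2 / 2 : ℝ) +
      ((c : ℝ) + ((b:ℝ)+(d:ℝ)) * Real.sqrt 2 / 2 : ℝ) * I := by
  have hr : ((Real.sqrt 2 : ℝ) : ℂ)^2 = 2 := by
    rw [← Complex.ofReal_pow, Real.sq_sqrt (by norm_num : (2:ℝ) ≥ 0)]; norm_num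
  simp only [rep, omg_eq, rt2]
  push_cast
  linear_combination ((c:ℂ)*I/2 + (d:ℂ)*(I-1)*((Real.sqrt 2:ℝ):ℂ)/4) * hr +
    ((c:ℂ)*((Real.sqrt 2:ℝ):ℂ)^2/4 + (d:ℂ)*((Real.sqrt 2:ℝ):ℂ)^3/8*(3+I)) * Complex.I_sq

lemma rep_zero {a b c d : ℤ} (h : rep a b c d = 0) : a = 0 ∧ b = 0 ∧ c = 0 ∧ d = 0 := by
  rw [rep_re_im] at h
  have hre : (a : ℝ) + ((b:ℝ)-(d:ℝ)) * Real.sqrt 2 / 2 = 0 := by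
    have := congrArg Complex.re h; simpa using this
  have him : (c : ℝ) + ((b:ℝ)+(d:ℝ)) * Real.sqrt 2 / 2 = 0 := by
    have := congrArg Complex.im h; simpa using this
  have h1 := int_sqrt (2*a) (b-d) (by push_cast; linarith)
  have h2 := int_sqrt (2*c) (b+d) (by push_cast; linarith)
  omega

lemma rep_inj {a b c d a' b' c' d' : ℤ} (h : rep a b c d = rep a' b' c' d') :
    a = a' ∧ b = b' ∧ c = c' ∧ d = d' := by
  have : rep (a-a') (b-b') (c-c') (d-d') = 0 := by
    simp only [rep] at h ⊢; push_cast; linear_combination h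
  have := rep_zero this
  omega

lemma parities (a b c d : ℤ) (hS : 2 ∣ a^2+b^2+c^2+d^2) (hT : 2 ∣ a*b+b*c+c*d-d*a) :
    2 ∣ a + c ∧ 2 ∣ b + d := by
  have key : ∀ α β γ δ : ZMod 2, α^2+β^2+γ^2+δ^2 = 0 → α*β+β*γ+γ*δ-δ*α = 0 →
      α+γ = 0 ∧ β+δ = 0 := by decide
  have hS' : ((a:ZMod 2))^2 + (b:ZMod 2)^2 + (c:ZMod 2)^2 + (d:ZMod 2)^2 = 0 := by
    have : ((a^2+b^2+c^2+d^2 : ℤ) : ZMod 2) = 0 :=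
      (ZMod.intCast_zmod_eq_zero_iff_dvd _ 2).mpr (by exact_mod_cast hS)
    push_cast at this; exact this
  have hT' : (a:ZMod 2)*(b:ZMod 2) + (b:ZMod 2)*(c:ZMod 2) + (c:ZMod 2)*(d:ZMod 2)
      - (d:ZMod 2)*(a:ZMod 2) = 0 := by
    have : ((a*b+b*c+c*d-d*a : ℤ) : ZMod 2) = 0 :=
      (ZMod.intCast_zmod_eq_zero_iff_dvd _ 2).mpr (by exact_mod_cast hT)
    push_cast at this; exact this
  obtain ⟨g1, g2⟩ := key a b c d hS' hT'
  constructor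
  · have : ((a + c : ℤ) : ZMod 2) = 0 := by push_cast; exact g1
    exact_mod_cast (ZMod.intCast_zmod_eq_zero_iff_dvd _ 2).mp this
  · have : ((b + d : ℤ) : ZMod 2) = 0 := by push_cast; exact g2
    exact_mod_cast (ZMod.intCast_zmod_eq_zero_iff_dvd _ 2).mp this

/-- The key equivalence: √2^k ∣ x in Z[ω] iff 2^k ∣ x·x̄ in Z[ω]. -/
lemma key_dvd (k : ℕ) : ∀ x : ℂ, Zomega x →
    (ZDvd (rt2 ^ k) x ↔ ZDvd ((2:ℂ) ^ k) (x * (starRingEnd ℂ) x)) := by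
  induction k with
  | zero =>
    intro x hx
    obtain ⟨a, b, c, d, rfl⟩ := hx
    rw [rep_def]
    constructor
    · intro _
      exact ⟨_, rep_mem _ _ _ _, by rw [norm_rep]; ring⟩
    · intro _
      exact ⟨_, rep_mem a b c d, by ring⟩
  | succ k ih =>
    intro x hx
    obtain ⟨a, b, c, d, rfl⟩ := hx
    rw [rep_def]
    constructor
    · rintro ⟨q, hq, hxq⟩
      obtain ⟨e, f, g, h, rfl⟩ := hq
      rw [rep_def] at hxq
      refine ⟨rep e f g h * (starRingEnd ℂ) (rep e f g h), ?_, ?_⟩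
      · rw [norm_rep]; exact rep_mem _ _ _ _
      · rw [hxq, map_mul, map_pow, conj_rt2]
        rw [show (2:ℂ)^(k+1) = (rt2^2)^(k+1) by rw [hs2]]
        ring
    · rintro ⟨w, hw, hxw⟩
      obtain ⟨p, q, r, s, rfl⟩ := hw
      rw [rep_def] at hxw
      rw [norm_rep, two_pow_mul_rep] at hxw
      obtain ⟨eS, eT, -, -⟩ := rep_inj hxw
      -- S and T are even
      have hdS : 2 ∣ a^2+b^2+c^2+d^2 := ⟨2^k * p, by rw [eS]; ring⟩
      have hdT : 2 ∣ a*b+b*c+c*d-d*a := ⟨2^k * q, by rw [eT]; ring⟩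
      obtain ⟨hac, hbd⟩ := parities a b c d hdS hdT
      obtain ⟨u, hu⟩ := hac
      obtain ⟨v, hv⟩ := hbd
      -- x = rt2 * q0
      have e1 : u - (u - a) = a := by omega
      have e2 : v - d + v = b := by omega
      have e3 : u + (u - a) = c := by omega
      have e4 : v - (v - d) = d := by omega
      have hx2 : rep a b c d = rt2 * rep (v-d) u v (u-a) := by
        rw [rt2_mul_rep, e1, e2, e3, e4]
      -- norm of q0 is divisible by 2^k
      have hnq : rep (v-d) u v (u-a) * (starRingEnd ℂ) (rep (v-d) u v (u-a)) =
          (2:ℂ)^k * rep p q r s := by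
        have h2 : (2:ℂ) ≠ 0 := two_ne_zero
        apply mul_left_cancel₀ h2
        have : rep a b c d * (starRingEnd ℂ) (rep a b c d) =
            2 * (rep (v-d) u v (u-a) * (starRingEnd ℂ) (rep (v-d) u v (u-a))) := by
          rw [hx2, map_mul, conj_rt2]
          rw [show (2:ℂ) = rt2^2 from hs2.symm]
          ring
        rw [← this, norm_rep, hxw, ← two_pow_mul_rep]; ring
      have := (ih (rep (v-d) u v (u-a)) (rep_mem _ _ _ _)).mpr
        ⟨rep p q r s, rep_mem _ _ _ _, hnq⟩
      obtain ⟨q1, hq1, hq1e⟩ := this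
      exact ⟨q1, hq1, by rw [hx2, hq1e]; ring⟩

/-- For x ∈ Z[ω], gde(x, √2) = gde(|x|², 2). -/
theorem stmt5 (x : ℂ) (hx : Zomega x) (k : ℕ) :
    IsGde rt2 x k ↔ IsGde 2 (x * (starRingEnd ℂ) x) k := by
  unfold IsGde
  rw [key_dvd k x hx, key_dvd (k+1) x hx]
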